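/- Let φ : ℤ_p[[T]] → ℤ_p[[T]] be the ℤ_p-algebra endomorphism determined by φ(T) = (1+T)^p − 1. Then the map (f_0, …, f_{p−1}) ↦ Σ_{i=0}^{p−1} (1+T)^i · φ(f_i) is a bijection from ℤ_p[[T]]^p onto ℤ_p[[T]]; equivalently, ℤ_p[[T]] is a free module of rank p over the subring φ(ℤ_p[[T]]) with basis 1, (1+T), …, (1+T)^{p−1}. -/

import Mathlib

/-- Composition (substitution) `f ↦ f ∘ g` of power series, valid when the constant
coefficient of `g` is zero: the `n`-th coefficient of `f(g)` is
`Σ_{k ≤ n} (coeff k f) · (coeff n (g^k))`. -/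
noncomputable def psComp (R : Type*) [CommRing R] (g f : PowerSeries R) : PowerSeries R :=
  PowerSeries.mk fun n =>
    ∑ k ∈ Finset.range (n + 1), PowerSeries.coeff k f * PowerSeries.coeff n (g ^ k)

open Finset PowerSeries Filter

namespace Stmt5Aux

variable {S : Type*} [CommRing S]

lemma coeff_one_add_X_pow (i n : ℕ) :
    coeff n ((1 + X) ^ i) = (i.choose n : S) := by
  rw [add_comm (1 : PowerSeries S) X, add_pow]
  rw [map_sum]
  have : ∀ k ∈ range (i+1), coeff n (X ^ k * 1 ^ (i-k) * (i.choose k : PowerSeries S))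
      = if n = k then (i.choose k : S) else 0 := by
    intro k _
    rw [one_pow, mul_one, ← map_natCast (C (R := S)) (i.choose k), mul_comm, coeff_C_mul,
      coeff_X_pow]
    simp [mul_comm]
  rw [Finset.sum_congr rfl this]
  rw [Finset.sum_ite_eq (range (i+1)) n (fun k => (i.choose k : S))]
  split_ifs with h
  · rfl
  · rw [mem_range, not_lt] at h
    rw [Nat.choose_eq_zero_of_lt (by omega)]; simp

lemma coeff_pow_eq_zero_of_constantCoeff_eq_zero {g : PowerSeries S}
    (hg : constantCoeff g = 0) {k b : ℕ} (h : b < k) : coeff b (g ^ k) = 0 := by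
  have : X ^ k ∣ g ^ k := pow_dvd_pow_of_dvd (X_dvd_iff.2 hg) k
  rw [X_pow_dvd_iff] at this
  exact this b h

lemma coeff_mul_psComp (g q : PowerSeries S) (hg : constantCoeff g = 0) (h : PowerSeries S)
    (m : ℕ) :
    coeff m (h * psComp S g q) =
      ∑ k ∈ range (m + 1), coeff k q * coeff m (h * g ^ k) := by
  rw [coeff_mul]
  have step1 : ∀ ab ∈ antidiagonal m,
      coeff ab.1 h * coeff ab.2 (psComp S g q)
      = ∑ k ∈ range (m+1), coeff k q * (coeff ab.1 h * coeff ab.2 (g ^ k)) := by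
    intro ab hab
    rw [HasAntidiagonal.mem_antidiagonal] at hab
    have hb : ab.2 ≤ m := by omega
    rw [psComp, coeff_mk]
    rw [Finset.sum_subset (by intro x; simp only [mem_range]; omega : range (ab.2+1) ⊆ range (m+1))]
    · rw [Finset.mul_sum]
      apply Finset.sum_congr rfl
      intro k _
      ring
    · intro k _ hk
      rw [mem_range, not_lt] at hk
      rw [coeff_pow_eq_zero_of_constantCoeff_eq_zero hg (by omega), mul_zero]
  rw [Finset.sum_congr rfl step1, Finset.sum_comm]
  apply Finset.sum_congr rfl
  intro k _
  rw [← Finset.mul_sum, coeff_mul]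

lemma sum_range_mul_succ {M : Type*} [AddCommMonoid M] (p m : ℕ) (F : ℕ → M) :
    ∑ n ∈ range (p * (m+1)), F n = ∑ k ∈ range (m+1), ∑ j ∈ range p, F (p * k + j) := by
  induction m with
  | zero => simp
  | succ m ih =>
    have h1 : p * (m+2) = p * (m+1) + p := by ring
    rw [h1, Finset.sum_range_add, ih, Finset.sum_range_succ (n := m+1)]

end Stmt5Aux

section Part2
open Finset PowerSeries Filter Stmt5Aux

variable (p : ℕ) [hp : Fact p.Prime]

namespace Stmt5Aux

/-- `g = (1+X)^p - 1`. -/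
noncomputable def gg : PowerSeries ℤ_[p] := (1 + X) ^ p - 1

lemma constantCoeff_gg : constantCoeff (gg p) = 0 := by
  have : constantCoeff ((1+X)^p : PowerSeries ℤ_[p]) = 1 := by
    have := coeff_one_add_X_pow (S := ℤ_[p]) p 0
    rw [← coeff_zero_eq_constantCoeff, this, Nat.choose_zero_right, Nat.cast_one]
  rw [gg, map_sub, this, map_one, sub_self]

lemma exists_u : ∃ u : PowerSeries ℤ_[p], gg p = X ^ p + C (p : ℤ_[p]) * u := by
  refine ⟨PowerSeries.mk fun j => ((p.choose j / p : ℕ) : ℤ_[p]), ?_⟩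
  have hp2 : 2 ≤ p := hp.out.two_le
  ext n
  rw [gg, map_sub, coeff_one_add_X_pow, map_add, coeff_X_pow, coeff_C_mul, coeff_mk,
    coeff_one]
  rcases eq_or_ne n 0 with rfl | hn0
  · have h1 : (1:ℕ) / p = 0 := Nat.div_eq_of_lt (by omega)
    simp only [h1, Nat.cast_zero, mul_zero, add_zero, Nat.choose_zero_right,
      Nat.cast_one, sub_self, if_pos rfl]
    rw [if_neg (by omega : ¬ (0:ℕ) = p)]
    simp
  · rcases lt_trichotomy n p with hnp | heq | hnp
    · have hdvd : p ∣ p.choose n := hp.out.dvd_choose_self hn0 hnp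
      have h2 : (p : ℤ_[p]) * ((p.choose n / p : ℕ) : ℤ_[p]) = (p.choose n : ℤ_[p]) := by
        rw [← Nat.cast_mul, Nat.mul_div_cancel' hdvd]
      simp only [if_neg (by omega : ¬ n = p), if_neg hn0, h2, zero_add, sub_zero]
    · subst heq
      have h1 : (1:ℕ) / n = 0 := Nat.div_eq_of_lt (by omega)
      simp [Nat.choose_self, h1, hn0]
    · have h1 : p.choose n / p = 0 := by
        rw [Nat.choose_eq_zero_of_lt hnp, Nat.zero_div]
      simp only [h1, Nat.cast_zero, mul_zero, add_zero, Nat.choose_eq_zero_of_lt hnp,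
        if_neg hn0, sub_zero]
      rw [if_neg (by omega : ¬ n = p)]
      simp

lemma exists_w (k : ℕ) : ∃ w : PowerSeries ℤ_[p],
    (gg p) ^ k = X ^ (p * k) + C (p : ℤ_[p]) * w := by
  induction k with
  | zero => exact ⟨0, by simp⟩
  | succ k ih =>
    obtain ⟨w, hw⟩ := ih
    obtain ⟨u, hu⟩ := exists_u p
    refine ⟨u * X ^ (p*k) + (X ^ p + C (p : ℤ_[p]) * u) * w, ?_⟩
    rw [pow_succ, hw, hu]
    have h2 : p * (k+1) = p * k + p := by ring
    rw [h2, pow_add]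
    ring

/-- choice of `w k` with `g^k = X^(pk) + p ⬝ w k`. -/
noncomputable def ww (k : ℕ) : PowerSeries ℤ_[p] := (exists_w p k).choose

lemma ww_spec (k : ℕ) : (gg p) ^ k = X ^ (p * k) + C (p : ℤ_[p]) * ww p k :=
  (exists_w p k).choose_spec

/-- the full matrix. -/
noncomputable def matA (m n : ℕ) : ℤ_[p] :=
  coeff m ((1 + X) ^ (n % p) * (gg p) ^ (n / p))

/-- block matrix constructor. -/
noncomputable def blockMat (e : ℕ → ℕ → ℤ_[p]) (m n : ℕ) : ℤ_[p] :=
  if m / p = n / p then e (m % p) (n % p) else 0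

/-- the "diagonal" part. -/
noncomputable def matD : ℕ → ℕ → ℤ_[p] :=
  blockMat p (fun r s => (s.choose r : ℤ_[p]))

/-- inverse of the diagonal part. -/
noncomputable def matD' : ℕ → ℕ → ℤ_[p] :=
  blockMat p (fun r s => (-1 : ℤ_[p]) ^ (s - r) * (s.choose r : ℤ_[p]))

/-- the p-divisible part. -/
noncomputable def matB (m n : ℕ) : ℤ_[p] :=
  coeff m ((1 + X) ^ (n % p) * ww p (n / p))

lemma matD_eq (m n : ℕ) :
    coeff m ((1 + X) ^ (n % p) * X ^ (p * (n / p))) = matD p m n := by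
  have hp0 : 0 < p := hp.out.pos
  have hi : n % p < p := Nat.mod_lt _ hp0
  have hm := Nat.div_add_mod m p
  have hmr : m % p < p := Nat.mod_lt _ hp0
  rw [coeff_mul_X_pow', matD, blockMat]
  rcases le_or_gt (p * (n/p)) m with hle | hlt
  · rw [if_pos hle, coeff_one_add_X_pow]
    by_cases hdiv : m / p = n / p
    · rw [if_pos hdiv]
      have h4 : p * (n/p) = p * (m/p) := by rw [hdiv]
      have h6 : m - p * (n/p) = m % p := by omega
      rw [h6]
    · rw [if_neg hdiv]
      have h1 : n / p ≤ m / p := (Nat.le_div_iff_mul_le hp0).2 (by rw [mul_comm]; exact hle)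
      have h2 : n/p + 1 ≤ m/p := by omega
      have h3 : (n/p+1)*p ≤ m := (Nat.le_div_iff_mul_le hp0).1 h2
      have h5 : (n/p+1)*p = p*(n/p) + p := by ring
      rw [Nat.choose_eq_zero_of_lt (by omega), Nat.cast_zero]
  · rw [if_neg (not_le.2 hlt)]
    have hmm : m / p * p ≤ m := Nat.div_mul_le_self m p
    have h3 : ¬ (m / p = n / p) := by
      intro h
      have h4 : p * (n/p) = m/p * p := by rw [← h, mul_comm]
      omega
    rw [if_neg h3]

lemma matA_eq (m n : ℕ) : matA p m n = matD p m n + (p : ℤ_[p]) * matB p m n := by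
  rw [matA, ww_spec p (n/p), mul_add, map_add, matD_eq]
  congr 1
  rw [matB, show (1+X:PowerSeries ℤ_[p])^(n%p) * (C (p : ℤ_[p]) * ww p (n/p))
      = C (p : ℤ_[p]) * ((1+X)^(n%p) * ww p (n/p)) by ring, coeff_C_mul]

end Stmt5Aux
end Part2
section Part3
open Finset PowerSeries Filter

namespace Stmt5Aux

lemma neg_one_pow_sub_aux (a t : ℕ) (ht : t ≤ a) :
    (-1 : ℤ) ^ (a - t) = (-1)^a * (-1)^t := by
  have h1 : (a - t) + t = a := by omega
  calc (-1 : ℤ) ^ (a - t) = (-1)^(a-t) * ((-1)^t * (-1)^t) := by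
        rw [← pow_add, Even.neg_one_pow ⟨t, rfl⟩, mul_one]
    _ = ((-1)^(a-t) * (-1)^t) * (-1)^t := by ring
    _ = (-1)^a * (-1)^t := by rw [← pow_add, h1]

lemma sum_Icc_eq_sum_range' (f : ℕ → ℤ) (r s : ℕ) :
    ∑ j ∈ Icc r s, f j = ∑ t ∈ range (s + 1 - r), f (r + t) := by
  refine Finset.sum_nbij' (fun j => j - r) (fun t => r + t) ?_ ?_ ?_ ?_ ?_ <;>
    intros a ha <;> simp_all [mem_Icc, mem_range] <;> omega

lemma pascal_aux (r s : ℕ) (hrs : r ≤ s) (ε : ℤ) (F : ℕ → ℤ)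
    (hF : ∀ t, t ≤ s - r →
      F (r + t) = ε * ((-1)^t * ((r+t).choose r : ℤ) * (s.choose (r+t) : ℤ))) :
    ∑ j ∈ Icc r s, F j = ε * (if r = s then 1 else 0) := by
  rw [sum_Icc_eq_sum_range']
  have h1 : s + 1 - r = (s - r) + 1 := by omega
  rw [h1]
  have h2 : ∀ t ∈ range (s - r + 1), F (r + t)
      = (ε * (s.choose r : ℤ)) * ((-1)^t * ((s-r).choose t : ℤ)) := by
    intro t ht
    rw [mem_range] at ht
    have ht' : t ≤ s - r := by omega
    rw [hF t ht']
    have h3 : s.choose (r+t) * (r+t).choose r = s.choose r * (s-r).choose (r+t-r) :=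
      Nat.choose_mul (by omega)
    have h4 : r + t - r = t := by omega
    rw [h4] at h3
    have h3' : (r+t).choose r * s.choose (r+t) = s.choose r * (s-r).choose t := by
      rw [mul_comm]; exact h3
    have h5 : ((r+t).choose r : ℤ) * (s.choose (r+t) : ℤ)
        = (s.choose r : ℤ) * ((s-r).choose t : ℤ) := by exact_mod_cast h3'
    calc ε * ((-1)^t * ((r+t).choose r : ℤ) * (s.choose (r+t) : ℤ))
        = ε * ((-1)^t * (((r+t).choose r : ℤ) * (s.choose (r+t) : ℤ))) := by ring
      _ = ε * ((-1)^t * ((s.choose r : ℤ) * ((s-r).choose t : ℤ))) := by rw [h5]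
      _ = (ε * (s.choose r : ℤ)) * ((-1)^t * ((s-r).choose t : ℤ)) := by ring
  rw [Finset.sum_congr rfl h2, ← Finset.mul_sum, Int.alternating_sum_range_choose]
  by_cases h : r = s
  · subst h; simp
  · rw [if_neg (by omega : ¬ s - r = 0), if_neg h, mul_zero, mul_zero]

lemma pascal1 (N r s : ℕ) (hs : s < N) :
    ∑ j ∈ range N, (j.choose r : ℤ) * ((-1)^(s-j) * (s.choose j : ℤ))
      = if r = s then 1 else 0 := by
  rcases le_or_gt r s with hrs | hrs
  · have hsub : Icc r s ⊆ range N := by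
      intro j hj; rw [mem_Icc] at hj; rw [mem_range]; omega
    rw [← Finset.sum_subset hsub ?_]
    · have := pascal_aux r s hrs ((-1)^(s-r))
        (fun j => (j.choose r : ℤ) * ((-1)^(s-j) * (s.choose j : ℤ))) ?_
      · rw [this]
        by_cases h : r = s
        · subst h; simp
        · simp [h]
      · intro t ht
        have h6 : s - (r + t) = (s - r) - t := by omega
        rw [h6, neg_one_pow_sub_aux (s-r) t ht]
        ring
    · intro j _ hj
      rw [mem_Icc] at hj
      rcases le_or_gt j s with h | h
      · rw [Nat.choose_eq_zero_of_lt (by omega : j < r), Nat.cast_zero, zero_mul]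
      · rw [Nat.choose_eq_zero_of_lt h, Nat.cast_zero, mul_zero, mul_zero]
  · rw [if_neg (by omega)]
    apply Finset.sum_eq_zero
    intro j _
    rcases le_or_gt j s with h | h
    · rw [Nat.choose_eq_zero_of_lt (by omega : j < r), Nat.cast_zero, zero_mul]
    · rw [Nat.choose_eq_zero_of_lt h, Nat.cast_zero, mul_zero, mul_zero]

lemma pascal2 (N r s : ℕ) (hs : s < N) :
    ∑ j ∈ range N, ((-1)^(j-r) * (j.choose r : ℤ)) * (s.choose j : ℤ)
      = if r = s then 1 else 0 := by
  rcases le_or_gt r s with hrs | hrs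
  · have hsub : Icc r s ⊆ range N := by
      intro j hj; rw [mem_Icc] at hj; rw [mem_range]; omega
    rw [← Finset.sum_subset hsub ?_]
    · have := pascal_aux r s hrs 1
        (fun j => ((-1)^(j-r) * (j.choose r : ℤ)) * (s.choose j : ℤ)) ?_
      · rw [this, one_mul]
      · intro t ht
        have h6 : r + t - r = t := by omega
        rw [h6]
        ring
    · intro j _ hj
      rw [mem_Icc] at hj
      rcases le_or_gt j s with h | h
      · rw [Nat.choose_eq_zero_of_lt (by omega : j < r), Nat.cast_zero, mul_zero, zero_mul]
      · rw [Nat.choose_eq_zero_of_lt h, Nat.cast_zero, mul_zero]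
  · rw [if_neg (by omega)]
    apply Finset.sum_eq_zero
    intro j _
    rcases le_or_gt j s with h | h
    · rw [Nat.choose_eq_zero_of_lt (by omega : j < r), Nat.cast_zero, mul_zero, zero_mul]
    · rw [Nat.choose_eq_zero_of_lt h, Nat.cast_zero, mul_zero]

end Stmt5Aux
end Part3
section Part4
open Finset PowerSeries Filter

namespace Stmt5Aux

variable (p : ℕ) [hp : Fact p.Prime]

/-- action of an (row-finite) infinite matrix on a sequence. -/
noncomputable def act (M : ℕ → ℕ → ℤ_[p]) (c : ℕ → ℤ_[p]) (m : ℕ) : ℤ_[p] :=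
  ∑ n ∈ range (p * (m + 1)), M m n * c n

lemma act_mul_left (M : ℕ → ℕ → ℤ_[p]) (c : ℕ → ℤ_[p]) (a : ℤ_[p]) (m : ℕ) :
    act p M (fun n => a * c n) m = a * act p M c m := by
  rw [act, act, Finset.mul_sum]
  exact Finset.sum_congr rfl fun n _ => by ring

lemma act_add (M : ℕ → ℕ → ℤ_[p]) (c d : ℕ → ℤ_[p]) (m : ℕ) :
    act p M (fun n => c n + d n) m = act p M c m + act p M d m := by
  rw [act, act, act, ← Finset.sum_add_distrib]
  exact Finset.sum_congr rfl fun n _ => by ring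

lemma act_sub (M : ℕ → ℕ → ℤ_[p]) (c d : ℕ → ℤ_[p]) (m : ℕ) :
    act p M (fun n => c n - d n) m = act p M c m - act p M d m := by
  rw [act, act, act, ← Finset.sum_sub_distrib]
  exact Finset.sum_congr rfl fun n _ => by ring

lemma divmod1 (k j : ℕ) (hj : j < p) : (p * k + j) / p = k := by
  rw [Nat.mul_add_div hp.out.pos, Nat.div_eq_of_lt hj, add_zero]

omit hp in
lemma divmod2 (k j : ℕ) (hj : j < p) : (p * k + j) % p = j := by
  rw [Nat.mul_add_mod, Nat.mod_eq_of_lt hj]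

lemma act_blockMat (e : ℕ → ℕ → ℤ_[p]) (c : ℕ → ℤ_[p]) (m : ℕ) :
    act p (blockMat p e) c m = ∑ j ∈ range p, e (m % p) j * c (p * (m / p) + j) := by
  rw [act, sum_range_mul_succ]
  have key : ∀ k ∈ range (m+1), ∑ j ∈ range p, blockMat p e m (p*k+j) * c (p*k+j)
      = if m / p = k then ∑ j ∈ range p, e (m % p) j * c (p*k+j) else 0 := by
    intro k _
    by_cases h : m / p = k
    · rw [if_pos h]
      refine Finset.sum_congr rfl fun j hj => ?_
      rw [mem_range] at hj
      rw [blockMat, divmod1 p k j hj, divmod2 p k j hj, if_pos h]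
    · rw [if_neg h]
      refine Finset.sum_eq_zero fun j hj => ?_
      rw [mem_range] at hj
      rw [blockMat, divmod1 p k j hj, if_neg h, zero_mul]
  rw [Finset.sum_congr rfl key, Finset.sum_ite_eq (range (m+1)) (m/p),
    if_pos (mem_range.2 (by have := Nat.div_le_self m p; omega))]

lemma act_blockMat_comp (e f : ℕ → ℕ → ℤ_[p]) (c : ℕ → ℤ_[p]) (m : ℕ) :
    act p (blockMat p e) (act p (blockMat p f) c) m
      = ∑ j ∈ range p, (∑ i ∈ range p, e (m % p) i * f i j) * c (p * (m / p) + j) := by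
  rw [act_blockMat]
  have key : ∀ i ∈ range p, e (m % p) i * act p (blockMat p f) c (p * (m / p) + i)
      = ∑ j ∈ range p, (e (m % p) i * f i j) * c (p * (m / p) + j) := by
    intro i hi
    rw [mem_range] at hi
    rw [act_blockMat, divmod1 p _ i hi, divmod2 p _ i hi, Finset.mul_sum]
    exact Finset.sum_congr rfl fun j _ => by ring
  rw [Finset.sum_congr rfl key, Finset.sum_comm]
  refine Finset.sum_congr rfl fun j _ => ?_
  rw [Finset.sum_mul]

lemma ortho1 (r s : ℕ) (hs : s < p) :
    ∑ i ∈ range p, ((i.choose r : ℤ_[p])) * ((-1 : ℤ_[p])^(s-i) * (s.choose i : ℤ_[p]))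
      = if r = s then 1 else 0 := by
  have h := pascal1 p r s hs
  have h2 : ((∑ j ∈ range p, (j.choose r : ℤ) * ((-1)^(s-j) * (s.choose j : ℤ)) : ℤ) : ℤ_[p])
      = ∑ i ∈ range p, ((i.choose r : ℤ_[p])) * ((-1 : ℤ_[p])^(s-i) * (s.choose i : ℤ_[p])) := by
    push_cast
    rfl
  rw [← h2, h]
  split_ifs <;> push_cast <;> rfl

lemma ortho2 (r s : ℕ) (hs : s < p) :
    ∑ i ∈ range p, ((-1 : ℤ_[p])^(i-r) * (i.choose r : ℤ_[p])) * ((s.choose i : ℤ_[p]))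
      = if r = s then 1 else 0 := by
  have h := pascal2 p r s hs
  have h2 : ((∑ j ∈ range p, ((-1)^(j-r) * (j.choose r : ℤ)) * (s.choose j : ℤ) : ℤ) : ℤ_[p])
      = ∑ i ∈ range p, ((-1 : ℤ_[p])^(i-r) * (i.choose r : ℤ_[p])) * ((s.choose i : ℤ_[p])) := by
    push_cast
    rfl
  rw [← h2, h]
  split_ifs <;> push_cast <;> rfl

lemma delta_sum (c : ℕ → ℤ_[p]) (m : ℕ) :
    ∑ j ∈ range p, (if m % p = j then (1:ℤ_[p]) else 0) * c (p * (m / p) + j) = c m := by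
  have key : ∀ j ∈ range p, (if m % p = j then (1:ℤ_[p]) else 0) * c (p * (m / p) + j)
      = if m % p = j then c (p * (m / p) + j) else 0 := by
    intro j _
    split_ifs <;> simp
  rw [Finset.sum_congr rfl key, Finset.sum_ite_eq (range p) (m % p),
    if_pos (mem_range.2 (Nat.mod_lt _ hp.out.pos))]
  rw [Nat.div_add_mod]

lemma DD' (c : ℕ → ℤ_[p]) (m : ℕ) :
    act p (matD p) (act p (matD' p) c) m = c m := by
  rw [matD, matD', act_blockMat_comp]
  have key : ∀ j ∈ range p,
      (∑ i ∈ range p, ((i.choose (m % p) : ℤ_[p])) * ((-1 : ℤ_[p])^(j-i) * (j.choose i : ℤ_[p])))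
        * c (p * (m / p) + j)
      = (if m % p = j then (1:ℤ_[p]) else 0) * c (p * (m / p) + j) := by
    intro j hj
    rw [mem_range] at hj
    rw [ortho1 p (m % p) j hj]
  rw [Finset.sum_congr rfl key, delta_sum]

lemma D'D (c : ℕ → ℤ_[p]) (m : ℕ) :
    act p (matD' p) (act p (matD p) c) m = c m := by
  rw [matD, matD', act_blockMat_comp]
  have key : ∀ j ∈ range p,
      (∑ i ∈ range p, ((-1 : ℤ_[p])^(i - m % p) * (i.choose (m % p) : ℤ_[p])) * ((j.choose i : ℤ_[p])))
        * c (p * (m / p) + j)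
      = (if m % p = j then (1:ℤ_[p]) else 0) * c (p * (m / p) + j) := by
    intro j hj
    rw [mem_range] at hj
    rw [ortho2 p (m % p) j hj]
  rw [Finset.sum_congr rfl key, delta_sum]

lemma act_matA (c : ℕ → ℤ_[p]) (m : ℕ) :
    act p (matA p) c m = act p (matD p) c m + (p : ℤ_[p]) * act p (matB p) c m := by
  rw [act, act, act, Finset.mul_sum, ← Finset.sum_add_distrib]
  refine Finset.sum_congr rfl fun n _ => ?_
  rw [matA_eq]
  ring

end Stmt5Aux
end Part4
section Part5
open Finset PowerSeries Filter

namespace Stmt5Aux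

variable (p : ℕ) [hp : Fact p.Prime]

/-- the correction operator. -/
noncomputable def Cop (c : ℕ → ℤ_[p]) : ℕ → ℤ_[p] :=
  act p (matD' p) (act p (matB p) c)

/-- the unipotent factor. -/
noncomputable def Sop (c : ℕ → ℤ_[p]) : ℕ → ℤ_[p] :=
  fun m => c m + (p : ℤ_[p]) * Cop p c m

lemma Cop_mul_left (a : ℤ_[p]) (c : ℕ → ℤ_[p]) :
    Cop p (fun n => a * c n) = fun m => a * Cop p c m := by
  funext m
  rw [Cop, Cop]
  have h1 : act p (matB p) (fun n => a * c n) = fun n => a * act p (matB p) c n :=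
    funext fun n => act_mul_left p _ _ _ _
  rw [h1, act_mul_left]

lemma Cop_sub (c d : ℕ → ℤ_[p]) :
    Cop p (fun n => c n - d n) = fun m => Cop p c m - Cop p d m := by
  funext m
  rw [Cop, Cop, Cop]
  have h1 : act p (matB p) (fun n => c n - d n)
      = fun n => act p (matB p) c n - act p (matB p) d n :=
    funext fun n => act_sub p _ _ _ _
  rw [h1, act_sub]

lemma Cop_iterate_mul_left (k : ℕ) (a : ℤ_[p]) (c : ℕ → ℤ_[p]) :
    (Cop p)^[k] (fun n => a * c n) = fun m => a * (Cop p)^[k] c m := by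
  induction k generalizing c with
  | zero => rfl
  | succ k ih =>
    rw [Function.iterate_succ_apply, Function.iterate_succ_apply, Cop_mul_left, ih]

lemma norm_scaled (k : ℕ) (y : ℤ_[p]) :
    ‖(-(p : ℤ_[p]))^k * y‖ ≤ ((p:ℝ)⁻¹)^k := by
  rw [norm_mul, norm_pow, norm_neg, PadicInt.norm_p]
  calc ((p:ℝ)⁻¹)^k * ‖y‖ ≤ ((p:ℝ)⁻¹)^k * 1 := by
        have := PadicInt.norm_le_one y
        have h0 : (0:ℝ) ≤ ((p:ℝ)⁻¹)^k := by positivity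
        nlinarith
    _ = ((p:ℝ)⁻¹)^k := mul_one _

lemma inv_p_lt_one : ((p:ℝ)⁻¹) < 1 := by
  rw [inv_lt_one_iff₀]; right; exact_mod_cast hp.out.one_lt

lemma summable_bound (f : ℕ → ℤ_[p]) (hf : ∀ k, ‖f k‖ ≤ ((p:ℝ)⁻¹)^k) : Summable f :=
  Summable.of_norm_bounded
    (summable_geometric_of_lt_one (by positivity) (inv_p_lt_one p)) hf

lemma eq_zero_of_norm_le_pow (x : ℤ_[p]) (h : ∀ k : ℕ, ‖x‖ ≤ ((p:ℝ)⁻¹)^k) : x = 0 := by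
  have h1 : Tendsto (fun k : ℕ => ((p:ℝ)⁻¹)^k) atTop (nhds 0) :=
    tendsto_pow_atTop_nhds_zero_of_lt_one (by positivity) (inv_p_lt_one p)
  have h2 : ‖x‖ ≤ 0 := ge_of_tendsto' h1 h
  have h3 : ‖x‖ = 0 := le_antisymm h2 (norm_nonneg x)
  exact norm_eq_zero.mp h3

lemma Sop_injective_aux (c : ℕ → ℤ_[p]) (h : ∀ m, Sop p c m = 0) (m : ℕ) : c m = 0 := by
  have hc : c = fun n => (-(p:ℤ_[p])) * Cop p c n := by
    funext n
    have := h n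
    rw [Sop] at this
    linear_combination this
  have key : ∀ k, ∀ m, c m = (-(p:ℤ_[p]))^k * ((Cop p)^[k] c) m := by
    intro k
    induction k with
    | zero => intro m; simp
    | succ k ih =>
      intro m
      have h2 : ((Cop p)^[k] c) = fun m => (-(p:ℤ_[p])) * ((Cop p)^[k+1] c) m := by
        conv_lhs => rw [hc]
        rw [Cop_iterate_mul_left]
        funext m'
        rw [Function.iterate_succ_apply]
      rw [ih m, h2, pow_succ]
      ring
  apply eq_zero_of_norm_le_pow
  intro k
  rw [key k m]
  exact norm_scaled p k _

lemma Sop_injective : Function.Injective (Sop p) := by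
  intro c d h
  funext m
  have h1 : ∀ m', Sop p (fun n => c n - d n) m' = 0 := by
    intro m'
    rw [Sop, Cop_sub]
    have h2 : Sop p c m' = Sop p d m' := by rw [h]
    rw [Sop, Sop] at h2
    linear_combination h2
  exact sub_eq_zero.mp (Sop_injective_aux p (fun n => c n - d n) h1 m)

lemma act_tsum (M : ℕ → ℕ → ℤ_[p]) (v : ℕ → ℕ → ℤ_[p]) (hv : ∀ n, Summable fun k => v k n)
    (m : ℕ) :
    act p M (fun n => ∑' k, v k n) m = ∑' k, act p M (v k) m := by
  rw [act]
  have h1 : ∀ n ∈ range (p * (m+1)), M m n * ∑' k, v k n = ∑' k, M m n * v k n :=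
    fun n _ => ((hv n).tsum_mul_left _).symm
  rw [Finset.sum_congr rfl h1]
  exact (Summable.tsum_finsetSum fun n _ => (hv n).mul_left _).symm

lemma Sop_surjective : Function.Surjective (Sop p) := by
  intro h
  set v : ℕ → ℕ → ℤ_[p] := fun k n => (-(p:ℤ_[p]))^k * ((Cop p)^[k] h) n with hv_def
  have hv : ∀ n, Summable fun k => v k n := fun n =>
    summable_bound p _ fun k => norm_scaled p k _
  set u : ℕ → ℤ_[p] := fun n => ∑' k, v k n with hu_def
  refine ⟨u, ?_⟩
  funext m
  -- compute Cop u
  have hBu : act p (matB p) u = fun n => ∑' k, act p (matB p) (v k) n := by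
    funext n
    exact act_tsum p (matB p) v hv n
  have hBsummable : ∀ n, Summable fun k => act p (matB p) (v k) n := by
    intro n
    apply summable_bound
    intro k
    have h2 : act p (matB p) (v k) n = (-(p:ℤ_[p]))^k * act p (matB p) ((Cop p)^[k] h) n :=
      act_mul_left p _ _ _ _
    rw [h2]
    exact norm_scaled p k _
  have hCu : Cop p u = fun m => ∑' k, (-(p:ℤ_[p]))^k * ((Cop p)^[k+1] h) m := by
    funext m'
    rw [Cop, hBu, act_tsum p (matD' p) _ hBsummable m']
    congr 1
    funext k
    have h3 : act p (matD' p) (act p (matB p) (v k)) m' = Cop p (v k) m' := rfl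
    rw [h3, hv_def]
    have h4 : Cop p (fun n => (-(p:ℤ_[p]))^k * ((Cop p)^[k] h) n)
        = fun m => (-(p:ℤ_[p]))^k * Cop p ((Cop p)^[k] h) m := Cop_mul_left p _ _
    rw [h4]
    dsimp only
    rw [Function.iterate_succ_apply']
  have hsum2 : Summable fun k => (-(p:ℤ_[p]))^k * ((Cop p)^[k+1] h) m :=
    summable_bound p _ fun k => norm_scaled p k _
  rw [Sop, hCu]
  dsimp only
  rw [← hsum2.tsum_mul_left ((p:ℤ_[p]))]
  have h5 : ∀ k:ℕ, (p:ℤ_[p]) * ((-(p:ℤ_[p]))^k * ((Cop p)^[k+1] h) m)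
      = -((-(p:ℤ_[p]))^(k+1) * ((Cop p)^[k+1] h) m) := by
    intro k; rw [pow_succ]; ring
  rw [tsum_congr h5, tsum_neg]
  have h6 : ∑' k, v k m = v 0 m + ∑' k, v (k+1) m := (hv m).tsum_eq_zero_add
  have h7 : v 0 m = h m := by rw [hv_def]; simp
  have h8 : u m = h m + ∑' k, (-(p:ℤ_[p]))^(k+1) * ((Cop p)^[k+1] h) m := by
    rw [hu_def]
    dsimp only
    rw [h6, h7]
  rw [h8]
  ring

end Stmt5Aux
end Part5
section Part6
open Finset PowerSeries Filter

namespace Stmt5Aux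

variable (p : ℕ) [hp : Fact p.Prime]

lemma Sop_bijective : Function.Bijective (Sop p) :=
  ⟨Sop_injective p, Sop_surjective p⟩

lemma Dop_bijective :
    Function.Bijective (fun c : ℕ → ℤ_[p] => (fun m => act p (matD p) c m)) := by
  rw [Function.bijective_iff_has_inverse]
  exact ⟨fun c m => act p (matD' p) c m,
    fun c => funext fun m => D'D p c m,
    fun c => funext fun m => DD' p c m⟩

lemma Top_eq : (fun c : ℕ → ℤ_[p] => (fun m => act p (matA p) c m))
    = (fun c : ℕ → ℤ_[p] => (fun m => act p (matD p) c m)) ∘ (Sop p) := by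
  funext c m
  have h1 : act p (matD p) (Sop p c) m
      = act p (matD p) c m + act p (matD p) (fun n => (p:ℤ_[p]) * Cop p c n) m :=
    act_add p (matD p) c (fun n => (p:ℤ_[p]) * Cop p c n) m
  have h2 : act p (matD p) (fun n => (p:ℤ_[p]) * Cop p c n) m
      = (p:ℤ_[p]) * act p (matD p) (Cop p c) m := act_mul_left p _ _ _ _
  have h3 : act p (matD p) (Cop p c) m = act p (matB p) c m := DD' p _ m
  show act p (matA p) c m = act p (matD p) (Sop p c) m
  rw [act_matA, h1, h2, h3]

lemma Top_bijective :
    Function.Bijective (fun c : ℕ → ℤ_[p] => (fun m => act p (matA p) c m)) := by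
  rw [Top_eq]
  exact (Dop_bijective p).comp (Sop_bijective p)

/-- packing a `p`-tuple of power series into a single coefficient sequence. -/
noncomputable def Emap (f : Fin p → PowerSeries ℤ_[p]) : ℕ → ℤ_[p] :=
  fun n => coeff (n / p) (f ⟨n % p, Nat.mod_lt n hp.out.pos⟩)

lemma Emap_bijective : Function.Bijective (Emap p) := by
  rw [Function.bijective_iff_has_inverse]
  refine ⟨fun c i => PowerSeries.mk fun k => c (p * k + (i : ℕ)), ?_, ?_⟩
  · intro f
    funext i
    ext k
    rw [coeff_mk, Emap, divmod1 p k (i:ℕ) i.isLt]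
    have hfin : (⟨(p*k+(i:ℕ)) % p, Nat.mod_lt _ hp.out.pos⟩ : Fin p) = i := by
      apply Fin.ext
      exact divmod2 p k (i:ℕ) i.isLt
    rw [hfin]
  · intro c
    funext n
    rw [Emap, coeff_mk]
    congr 1
    exact Nat.div_add_mod n p

lemma mk_bijective : Function.Bijective (fun c : ℕ → ℤ_[p] => PowerSeries.mk c) := by
  constructor
  · intro c d h
    funext n
    have := congrArg (coeff n) h
    rwa [coeff_mk, coeff_mk] at this
  · intro f
    exact ⟨fun n => coeff n f, by ext n; rw [coeff_mk]⟩

lemma coeff_Phi (f : Fin p → PowerSeries ℤ_[p]) (m : ℕ) :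
    coeff m (∑ i : Fin p, (1 + X : PowerSeries ℤ_[p]) ^ (i : ℕ)
        * psComp ℤ_[p] (gg p) (f i))
      = act p (matA p) (Emap p f) m := by
  rw [map_sum]
  have h1 : ∀ i : Fin p, coeff m ((1+X)^(i:ℕ) * psComp ℤ_[p] (gg p) (f i))
      = ∑ k ∈ range (m+1), coeff k (f i)
          * coeff m ((1+X)^(i:ℕ) * (gg p)^k) :=
    fun i => coeff_mul_psComp (gg p) (f i) (constantCoeff_gg p) _ m
  rw [Finset.sum_congr rfl fun i _ => h1 i]
  rw [act, sum_range_mul_succ]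
  -- turn the Fin p sum into a range p sum
  have h2 : (∑ i : Fin p, ∑ k ∈ range (m+1), coeff k (f i)
        * coeff m ((1+X)^(i:ℕ) * (gg p)^k))
      = ∑ j ∈ range p, ∑ k ∈ range (m+1),
          coeff k (f ⟨j % p, Nat.mod_lt j hp.out.pos⟩)
            * coeff m ((1+X)^(j % p) * (gg p)^k) := by
    rw [← Fin.sum_univ_eq_sum_range (fun j => ∑ k ∈ range (m+1),
      coeff k (f ⟨j % p, Nat.mod_lt j hp.out.pos⟩)
        * coeff m ((1+X)^(j % p) * (gg p)^k)) p]
    refine Finset.sum_congr rfl fun i _ => ?_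
    have hmod : (i : ℕ) % p = (i : ℕ) := Nat.mod_eq_of_lt i.isLt
    refine Finset.sum_congr rfl fun k _ => ?_
    have hfin : (⟨(i:ℕ) % p, Nat.mod_lt _ hp.out.pos⟩ : Fin p) = i := by
      apply Fin.ext
      exact hmod
    rw [hfin, hmod]
  rw [h2, Finset.sum_comm]
  refine Finset.sum_congr rfl fun k hk => ?_
  refine Finset.sum_congr rfl fun j hj => ?_
  rw [mem_range] at hj
  have e1 : (p*k+j)/p = k := divmod1 p k j hj
  have e3 : (p*k+j) % p = j % p := by rw [divmod2 p k j hj, Nat.mod_eq_of_lt hj]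
  have e2 : (⟨(p*k+j) % p, Nat.mod_lt _ hp.out.pos⟩ : Fin p)
      = ⟨j % p, Nat.mod_lt j hp.out.pos⟩ := by
    apply Fin.ext
    exact e3
  rw [matA, Emap, e1, e2, e3]
  ring

end Stmt5Aux
end Part6


/-- Let `φ : ℤ_p[[T]] → ℤ_p[[T]]` be the substitution endomorphism `T ↦ (1+T)^p − 1`.
Then `(f_0, …, f_{p−1}) ↦ Σ_i (1+T)^i φ(f_i)` is a bijection from `ℤ_p[[T]]^p` onto
`ℤ_p[[T]]`; i.e. `ℤ_p[[T]]` is free of rank `p` over `φ(ℤ_p[[T]])` with basis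
`1, (1+T), …, (1+T)^{p−1}`. -/
theorem stmt5 (p : ℕ) [Fact p.Prime] :
    Function.Bijective (fun f : Fin p → PowerSeries ℤ_[p] =>
      ∑ i : Fin p, (1 + PowerSeries.X : PowerSeries ℤ_[p]) ^ (i : ℕ) *
        psComp ℤ_[p] ((1 + PowerSeries.X) ^ p - 1) (f i)) := by
  have key : (fun f : Fin p → PowerSeries ℤ_[p] =>
      ∑ i : Fin p, (1 + PowerSeries.X : PowerSeries ℤ_[p]) ^ (i : ℕ) *
        psComp ℤ_[p] ((1 + PowerSeries.X) ^ p - 1) (f i))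
      = (fun c : ℕ → ℤ_[p] => PowerSeries.mk c)
        ∘ (fun c : ℕ → ℤ_[p] => (fun m => Stmt5Aux.act p (Stmt5Aux.matA p) c m))
        ∘ (Stmt5Aux.Emap p) := by
    funext f
    ext m
    rw [Function.comp_apply, Function.comp_apply, PowerSeries.coeff_mk]
    exact Stmt5Aux.coeff_Phi p f m
  rw [key]
  exact (Stmt5Aux.mk_bijective p).comp
    ((Stmt5Aux.Top_bijective p).comp (Stmt5Aux.Emap_bijective p))
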